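/- If voters' preferences are single-peaked with respect to a linear order on the candidates and the number of voters is odd, then there exists a Condorcet winner, i.e., a candidate who strictly defeats every other candidate in a pairwise majority comparison. -/
import Mathlib


open Finset

/-- Each voter's preference is a strict total (linear) order on the candidates. -/
def StrictPrefs {m N : ℕ} (P : Fin N → Fin m → Fin m → Prop) : Prop :=
  ∀ v : Fin N, IsStrictTotalOrder (Fin m) (P v)

/-- Single-peakedness w.r.t. the left-right order on `Fin m`: for `i < j < k`,
no voter ranks both `C_i` and `C_k` above `C_j`. -/
def SinglePeaked {m N : ℕ} (P : Fin N → Fin m → Fin m → Prop) : Prop :=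
  ∀ (v : Fin N) (i j k : Fin m), i < j → j < k → ¬ (P v i j ∧ P v k j)

/-- Number of voters preferring `a` to `b`. -/
def prefCount {m N : ℕ} (P : Fin N → Fin m → Fin m → Prop)
    [∀ v a b, Decidable (P v a b)] (a b : Fin m) : ℕ :=
  (univ.filter fun v => P v a b).card

/-- `a` majority-defeats `b`: strictly more than `N/2` voters prefer `a` to `b`. -/
def Defeats {m N : ℕ} (P : Fin N → Fin m → Fin m → Prop)
    [∀ v a b, Decidable (P v a b)] (a b : Fin m) : Prop :=
  2 * prefCount P a b > N

instance {m N : ℕ} (P : Fin N → Fin m → Fin m → Prop)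
    [∀ v a b, Decidable (P v a b)] (a b : Fin m) : Decidable (Defeats P a b) :=
  inferInstanceAs (Decidable (2 * prefCount P a b > N))

/-- Voter `v` approves candidate `a` under Bloc voting with `k` winners:
`a` is among `v`'s top `k` candidates. -/
def Approves {m N : ℕ} (P : Fin N → Fin m → Fin m → Prop)
    [∀ v a b, Decidable (P v a b)] (k : ℕ) (v : Fin N) (a : Fin m) : Prop :=
  (univ.filter fun b => P v b a).card < k

instance {m N : ℕ} (P : Fin N → Fin m → Fin m → Prop)
    [∀ v a b, Decidable (P v a b)] (k : ℕ) (v : Fin N) (a : Fin m) :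
    Decidable (Approves P k v a) :=
  inferInstanceAs (Decidable ((univ.filter fun b => P v b a).card < k))

/-- Bloc score of candidate `a`: the number of voters who approve `a`. -/
def blocScore {m N : ℕ} (P : Fin N → Fin m → Fin m → Prop)
    [∀ v a b, Decidable (P v a b)] (k : ℕ) (a : Fin m) : ℕ :=
  (univ.filter fun v => Approves P k v a).card

/-- `W` is a winning set under Bloc voting with `k` winners (strict vote totals):
`W` has `k` members and each member has strictly more approvals than each non-member. -/
def IsWinningSet {m N : ℕ} (P : Fin N → Fin m → Fin m → Prop)
    [∀ v a b, Decidable (P v a b)] (k : ℕ) (W : Finset (Fin m)) : Prop :=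
  W.card = k ∧ ∀ w ∈ W, ∀ c ∉ W, blocScore P k w > blocScore P k c


/-- A finite nonempty set has a top element for any trichotomous transitive relation. -/
lemma exists_top_aux {α : Type*} (r : α → α → Prop)
    (htri : ∀ a b, r a b ∨ a = b ∨ r b a)
    (htr : ∀ a b c, r a b → r b c → r a c) :
    ∀ s : Finset α, s.Nonempty → ∃ p ∈ s, ∀ x ∈ s, x ≠ p → r p x := by
  intro s
  induction s using Finset.cons_induction with
  | empty => intro h; exact absurd h (by simp)
  | cons a s ha ih =>
    intro _
    rcases s.eq_empty_or_nonempty with rfl | hs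
    · exact ⟨a, by simp, by simp⟩
    · obtain ⟨p, hp, hmax⟩ := ih hs
      rcases htri a p with h | rfl | h
      · refine ⟨a, Finset.mem_cons_self a s, ?_⟩
        intro x hx hxa
        rcases Finset.mem_cons.mp hx with rfl | hxs
        · exact absurd rfl hxa
        · rcases eq_or_ne x p with rfl | hxp
          · exact h
          · exact htr a p x h (hmax x hxs hxp)
      · exact absurd hp ha
      · refine ⟨p, Finset.mem_cons_of_mem hp, ?_⟩
        intro x hx hxp
        rcases Finset.mem_cons.mp hx with rfl | hxs
        · exact h
        · exact hmax x hxs hxp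

/-- Single-peaked preferences with an odd number of voters admit a
Condorcet winner. -/
theorem condorcet_winner_exists {m N : ℕ} (P : Fin N → Fin m → Fin m → Prop)
    [∀ v a b, Decidable (P v a b)] (hm : 0 < m)
    (hP : StrictPrefs P) (hSP : SinglePeaked P) (hN : Odd N) :
    ∃ w : Fin m, ∀ c : Fin m, c ≠ w → Defeats P w c := by
  classical
  haveI : Nonempty (Fin m) := ⟨⟨0, hm⟩⟩
  obtain ⟨t, rfl⟩ := hN
  -- each voter has a peak
  have hpeak : ∀ v : Fin (2 * t + 1), ∃ p : Fin m, ∀ x, x ≠ p → P v p x := by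
    intro v
    haveI := hP v
    obtain ⟨p, _, hp⟩ := exists_top_aux (P v) (fun a b => trichotomous_of (P v) a b)
      (fun a b c h1 h2 => _root_.trans h1 h2) univ univ_nonempty
    exact ⟨p, fun x hx => hp x (mem_univ x) hx⟩
  choose pk hpk using hpeak
  -- single-peaked consequences
  have left : ∀ (v : Fin (2 * t + 1)) (i j : Fin m), i < j → j ≤ pk v → P v j i := by
    intro v i j hij hjp
    haveI := hP v
    rcases eq_or_lt_of_le hjp with rfl | hlt
    · exact hpk v i (ne_of_lt hij)
    · by_contra h
      have hij' : P v i j := by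
        rcases trichotomous_of (P v) i j with h1 | h1 | h1
        · exact h1
        · exact absurd h1 (ne_of_lt hij)
        · exact absurd h1 h
      exact hSP v i j (pk v) hij hlt ⟨hij', hpk v j (ne_of_lt hlt)⟩
  have right : ∀ (v : Fin (2 * t + 1)) (j k : Fin m), pk v ≤ j → j < k → P v j k := by
    intro v j k hpj hjk
    haveI := hP v
    rcases eq_or_lt_of_le hpj with rfl | hlt
    · exact hpk v k (ne_of_gt hjk)
    · by_contra h
      have hkj : P v k j := by
        rcases trichotomous_of (P v) j k with h1 | h1 | h1
        · exact absurd h1 h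
        · exact absurd h1 (ne_of_lt hjk)
        · exact h1
      exact hSP v (pk v) j k hlt hjk ⟨hpk v j (ne_of_gt hlt), hkj⟩
  -- the median of the peaks
  set T : Finset (Fin m) :=
    univ.filter (fun x : Fin m => t + 1 ≤ (univ.filter fun v => pk v ≤ x).card) with hT
  have hTne : T.Nonempty := by
    refine ⟨univ.max' univ_nonempty, ?_⟩
    rw [hT, mem_filter]
    refine ⟨mem_univ _, ?_⟩
    have : (univ.filter fun v : Fin (2 * t + 1) => pk v ≤ univ.max' univ_nonempty) = univ := by
      apply filter_true_of_mem
      intro v _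
      exact le_max' _ _ (mem_univ _)
    rw [this, card_univ, Fintype.card_fin]
    omega
  set w := T.min' hTne with hwdef
  have hwT : w ∈ T := T.min'_mem hTne
  have hw1 : t + 1 ≤ (univ.filter fun v => pk v ≤ w).card := (mem_filter.mp hwT).2
  have hw2 : t + 1 ≤ (univ.filter fun v => w ≤ pk v).card := by
    set B : Finset (Fin (2 * t + 1)) := univ.filter fun v => pk v < w with hB
    have hBle : B.card ≤ t := by
      by_contra hcon
      push_neg at hcon
      have hBne : B.Nonempty := card_pos.mp (by omega)
      have hImne : (B.image pk).Nonempty := hBne.image pk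
      set x := (B.image pk).max' hImne with hx
      have hxw : x < w := by
        obtain ⟨v, hv, hvx⟩ := mem_image.mp ((B.image pk).max'_mem hImne)
        have := (mem_filter.mp hv).2
        omega
      have hxT : x ∈ T := by
        rw [hT, mem_filter]
        refine ⟨mem_univ _, ?_⟩
        calc t + 1 ≤ B.card := hcon
          _ ≤ (univ.filter fun v => pk v ≤ x).card := by
            apply card_le_card
            intro v hv
            rw [mem_filter]
            exact ⟨mem_univ _, le_max' _ _ (mem_image_of_mem pk hv)⟩
      have := T.min'_le x hxT
      rw [← hwdef] at this
      exact absurd hxw (not_lt.mpr this)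
    have hsplit := card_filter_add_card_filter_not
      (s := (univ : Finset (Fin (2 * t + 1)))) (p := fun v => w ≤ pk v)
    have hBeq : (univ.filter fun v => ¬ w ≤ pk v) = B := by
      rw [hB]
      apply filter_congr
      intro v _
      simp [not_le]
    rw [hBeq, card_univ, Fintype.card_fin] at hsplit
    omega
  refine ⟨w, ?_⟩
  intro c hc
  rcases lt_or_gt_of_ne hc with hlt | hgt
  · -- c < w : voters with peak ≥ w prefer w to c
    have hsub : (univ.filter fun v => w ≤ pk v) ⊆ (univ.filter fun v => P v w c) := by
      intro v hv
      rw [mem_filter] at hv ⊢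
      exact ⟨mem_univ _, left v c w hlt hv.2⟩
    have := card_le_card hsub
    have : t + 1 ≤ prefCount P w c := le_trans hw2 this
    unfold Defeats
    omega
  · -- w < c : voters with peak ≤ w prefer w to c
    have hsub : (univ.filter fun v => pk v ≤ w) ⊆ (univ.filter fun v => P v w c) := by
      intro v hv
      rw [mem_filter] at hv ⊢
      exact ⟨mem_univ _, right v w c hv.2 hgt⟩
    have := card_le_card hsub
    have : t + 1 ≤ prefCount P w c := le_trans hw1 this
    unfold Defeats
    omega
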